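/- Let G be a finite simple graph, and suppose there exists a symmetric matrix X indexed by V(G) with X_{u,v} ≥ 1 whenever u and v are equal or non-adjacent, and λ_max(X) = α(G). Suppose further that α(G ⊠ G) > α(G)^2. Then the quantity θ'(G) := inf over such feasible symmetric matrices X of λ_max(X) satisfies θ'(G) < √(α(G ⊠ G)) ≤ Θ(G), i.e., θ'(G) fails to upper bound the Shannon capacity of G. -/

import Mathlib

/-- A set of vertices is independent if no two of its elements are adjacent. -/
def IsIndep {V : Type*} (G : SimpleGraph V) (s : Set V) : Prop :=
  s.Pairwise fun u v => ¬ G.Adj u v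

/-- The independence number: the largest size of an independent set. -/
noncomputable def indepNum {V : Type*} [Fintype V] (G : SimpleGraph V) : ℕ :=
  sSup {n | ∃ s : Finset V, IsIndep G ↑s ∧ s.card = n}
/-- The strong product of two simple graphs. -/
def strongProd {V W : Type*} (G : SimpleGraph V) (H : SimpleGraph W) : SimpleGraph (V × W) where
  Adj a b := a ≠ b ∧ (a.1 = b.1 ∨ G.Adj a.1 b.1) ∧ (a.2 = b.2 ∨ H.Adj a.2 b.2)
  symm := ⟨fun a b h => ⟨fun e => h.1 e.symm, (h.2.1).imp Eq.symm (fun hadj => hadj.symm),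
    (h.2.2).imp Eq.symm (fun hadj => hadj.symm)⟩⟩
  loopless := ⟨fun a h => h.1 rfl⟩
/-- The `k`-fold strong power of a simple graph. -/
def strongPow {V : Type*} (G : SimpleGraph V) (k : ℕ) : SimpleGraph (Fin k → V) where
  Adj x y := x ≠ y ∧ ∀ i, x i = y i ∨ G.Adj (x i) (y i)
  symm := ⟨fun x y h => ⟨fun e => h.1 e.symm, fun i => (h.2 i).imp Eq.symm (fun hadj => hadj.symm)⟩⟩
  loopless := ⟨fun x h => h.1 rfl⟩

/-- The Shannon capacity `Θ(G) = sup_{k ≥ 1} α(G^{⊠ k})^{1/k}`. -/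
noncomputable def shannonCapacity {V : Type*} [Fintype V] [DecidableEq V]
    (G : SimpleGraph V) : ℝ :=
  ⨆ k : ℕ+, (indepNum (strongPow G k) : ℝ) ^ ((k : ℝ)⁻¹)

/-- Schrijver's θ'-function, dual SDP form: the infimum of the largest eigenvalue
over symmetric matrices `X` with `X u v ≥ 1` for all equal or non-adjacent pairs. -/
noncomputable def schrijverTheta {V : Type*} [Fintype V] [DecidableEq V]
    (G : SimpleGraph V) : ℝ :=
  sInf {t | ∃ X : Matrix V V ℝ, ∃ hX : X.IsHermitian,
    (∀ u v, (u = v ∨ ¬ G.Adj u v) → 1 ≤ X u v) ∧ t = ⨆ i, hX.eigenvalues i}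

lemma mem_indep_zero {W : Type*} (H : SimpleGraph W) :
    0 ∈ {n | ∃ s : Finset W, IsIndep H ↑s ∧ s.card = n} :=
  ⟨∅, by simp [IsIndep], rfl⟩

lemma indep_bdd {W : Type*} [Fintype W] (H : SimpleGraph W) :
    ∀ n ∈ {n | ∃ s : Finset W, IsIndep H ↑s ∧ s.card = n}, n ≤ Fintype.card W := by
  rintro n ⟨s, -, rfl⟩; exact s.card_le_univ

lemma indepNum_le_card {W : Type*} [Fintype W] (H : SimpleGraph W) :
    indepNum H ≤ Fintype.card W :=
  csSup_le ⟨0, mem_indep_zero H⟩ (indep_bdd H)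

lemma indepNum_empty {W : Type*} [Fintype W] [IsEmpty W] (H : SimpleGraph W) :
    indepNum H = 0 :=
  Nat.le_zero.mp (le_trans (indepNum_le_card H) (by simp))

lemma indepNum_le_of_equiv {V W : Type*} [Fintype V] [Fintype W]
    (G : SimpleGraph V) (H : SimpleGraph W) (e : V ≃ W)
    (he : ∀ a b, G.Adj a b ↔ H.Adj (e a) (e b)) : indepNum G ≤ indepNum H := by
  classical
  apply csSup_le ⟨0, mem_indep_zero G⟩
  rintro n ⟨s, hs, rfl⟩
  apply le_csSup ⟨Fintype.card W, indep_bdd H⟩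
  refine ⟨s.image e, ?_, Finset.card_image_of_injective s e.injective⟩
  intro a ha b hb hne hadj
  simp only [Finset.coe_image, Set.mem_image, Finset.mem_coe] at ha hb
  obtain ⟨u, hu, rfl⟩ := ha; obtain ⟨v, hv, rfl⟩ := hb
  exact hs hu hv (fun h => hne (by rw [h])) ((he u v).mpr hadj)

def e2 (V : Type*) : (Fin 2 → V) ≃ V × V where
  toFun f := (f 0, f 1)
  invFun p := ![p.1, p.2]
  left_inv f := by funext i; fin_cases i <;> simp
  right_inv p := by simp

lemma adj_pow_two {V : Type*} (G : SimpleGraph V) (x y : Fin 2 → V) :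
    (strongPow G 2).Adj x y ↔ (strongProd G G).Adj (e2 V x) (e2 V y) := by
  have hxy : x = y ↔ (x 0 = y 0 ∧ x 1 = y 1) := by
    rw [funext_iff, Fin.forall_fin_two]
  simp only [strongPow, strongProd, e2, Equiv.coe_fn_mk, ne_eq, Prod.mk.injEq,
    Fin.forall_fin_two, hxy]

lemma indepNum_pow_two {V : Type*} [Fintype V] (G : SimpleGraph V) :
    indepNum (strongPow G 2) = indepNum (strongProd G G) := by
  apply le_antisymm
  · exact indepNum_le_of_equiv _ _ (e2 V) (adj_pow_two G)
  · refine indepNum_le_of_equiv _ _ (e2 V).symm (fun a b => ?_)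
    rw [adj_pow_two G ((e2 V).symm a) ((e2 V).symm b)]
    simp

lemma trace_eq_sum_eig {V : Type*} [Fintype V] [DecidableEq V] {X : Matrix V V ℝ}
    (hX : X.IsHermitian) : X.trace = ∑ i, hX.eigenvalues i := by
  have h := hX.trace_eq_sum_eigenvalues
  simpa using h

theorem stmt18 {V : Type*} [Fintype V] [DecidableEq V] (G : SimpleGraph V)
    (hexists : ∃ X : Matrix V V ℝ, ∃ hX : X.IsHermitian,
      (∀ u v, (u = v ∨ ¬ G.Adj u v) → 1 ≤ X u v) ∧
      (⨆ i, hX.eigenvalues i) = (indepNum G : ℝ))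
    (hgt : (indepNum G) ^ 2 < indepNum (strongProd G G)) :
    schrijverTheta G < Real.sqrt (indepNum (strongProd G G)) ∧
    Real.sqrt (indepNum (strongProd G G)) ≤ shannonCapacity G := by
  have hV : Nonempty V := by
    by_contra h
    rw [not_nonempty_iff] at h
    rw [indepNum_empty, indepNum_empty] at hgt
    simp at hgt
  have hc1 : 0 < Fintype.card V := Fintype.card_pos
  -- Part 2
  have hbdd : BddAbove (Set.range fun k : ℕ+ =>
      (indepNum (strongPow G k) : ℝ) ^ ((k : ℝ)⁻¹)) := by
    refine ⟨(Fintype.card V : ℝ), ?_⟩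
    rintro x ⟨k, rfl⟩
    have h1 : (indepNum (strongPow G k) : ℝ) ≤ (Fintype.card V : ℝ) ^ (k : ℕ) := by
      have h := indepNum_le_card (strongPow G (k : ℕ))
      rw [Fintype.card_fun, Fintype.card_fin] at h
      exact_mod_cast h
    have hk : ((k : ℕ) : ℝ) ≠ 0 := by exact_mod_cast k.ne_zero
    have heq : ((Fintype.card V : ℝ) ^ (k : ℕ)) ^ (((k : ℕ) : ℝ))⁻¹ = Fintype.card V := by
      rw [← Real.rpow_natCast (Fintype.card V : ℝ) (k : ℕ), ← Real.rpow_mul (by positivity),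
        mul_inv_cancel₀ hk, Real.rpow_one]
    calc (indepNum (strongPow G k) : ℝ) ^ ((k : ℝ)⁻¹)
        ≤ ((Fintype.card V : ℝ) ^ (k : ℕ)) ^ ((k : ℝ)⁻¹) :=
          Real.rpow_le_rpow (by positivity) h1 (by positivity)
      _ = Fintype.card V := by rw [show ((k : ℝ))⁻¹ = (((k:ℕ):ℝ))⁻¹ by norm_cast]; exact heq
  have hsqrt : Real.sqrt (indepNum (strongProd G G)) =
      (indepNum (strongPow G ((2 : ℕ+) : ℕ)) : ℝ) ^ (((2 : ℕ+) : ℝ))⁻¹ := by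
    rw [show ((2 : ℕ+) : ℕ) = 2 from rfl, indepNum_pow_two, Real.sqrt_eq_rpow]
    norm_num
  have hΘ : Real.sqrt (indepNum (strongProd G G)) ≤ shannonCapacity G := by
    rw [hsqrt]
    exact le_ciSup hbdd 2
  -- Part 1
  have hlb : ∀ t ∈ {t | ∃ X : Matrix V V ℝ, ∃ hX : X.IsHermitian,
      (∀ u v, (u = v ∨ ¬ G.Adj u v) → 1 ≤ X u v) ∧ t = ⨆ i, hX.eigenvalues i}, (1:ℝ) ≤ t := by
    rintro t ⟨X, hX, hfeas, rfl⟩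
    have htr : (Fintype.card V : ℝ) ≤ ∑ i, hX.eigenvalues i := by
      rw [← trace_eq_sum_eig hX]
      calc (Fintype.card V : ℝ) = ∑ _v : V, (1 : ℝ) := by simp
        _ ≤ ∑ v, X v v := Finset.sum_le_sum fun v _ => hfeas v v (Or.inl rfl)
        _ = X.trace := rfl
    have hub : ∑ i, hX.eigenvalues i ≤ (Fintype.card V : ℝ) * ⨆ i, hX.eigenvalues i := by
      calc ∑ i, hX.eigenvalues i ≤ ∑ _i : V, (⨆ j, hX.eigenvalues j) :=
            Finset.sum_le_sum fun i _ => le_ciSup (Set.finite_range _).bddAbove i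
        _ = (Fintype.card V : ℝ) * ⨆ j, hX.eigenvalues j := by
            rw [Finset.sum_const, Finset.card_univ, nsmul_eq_mul]
    have hcard : (0:ℝ) < Fintype.card V := by exact_mod_cast hc1
    nlinarith [le_trans htr hub]
  have hθle : schrijverTheta G ≤ (indepNum G : ℝ) := by
    obtain ⟨X, hX, hfeas, hsup⟩ := hexists
    exact csInf_le ⟨1, fun t ht => hlb t ht⟩ ⟨X, hX, hfeas, hsup.symm⟩
  have hlt : (indepNum G : ℝ) < Real.sqrt (indepNum (strongProd G G)) := by
    rw [Real.lt_sqrt (by positivity)]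
    exact_mod_cast hgt
  exact ⟨lt_of_le_of_lt hθle hlt, hΘ⟩
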